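/- Let G = (V,E) be a connected simple graph with |V| > 4 and let v ∈ V be a vertex of degree one in G. Then δ(G − v) = δ(G), i.e., deleting a degree-one vertex of a graph with more than four vertices does not change the hyperbolicity. -/

import Mathlib

/-- The degree of a vertex (number of neighbors). -/
noncomputable def deg {V : Type*} (G : SimpleGraph V) (w : V) : ℕ :=
  (G.neighborSet w).ncard

/-- The four-point quantity δ(a,b,c,d): the difference between the largest and the
second-largest of the three distance sums D1, D2, D3. -/
noncomputable def delta4 {V : Type*} (G : SimpleGraph V) (a b c d : V) : ℕ :=
  let D1 := G.dist a b + G.dist c d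
  let D2 := G.dist a c + G.dist b d
  let D3 := G.dist a d + G.dist b c
  max (max D1 D2) D3 - min (min (max D1 D2) (max D2 D3)) (max D1 D3)

/-- The hyperbolicity of a graph: the maximum of δ(a,b,c,d) over all quadruples. -/
noncomputable def hyperbolicity {V : Type*} (G : SimpleGraph V) : ℕ :=
  sSup {n | ∃ a b c d, delta4 G a b c d = n}

section Aux
variable {V : Type*} {G : SimpleGraph V} {v u : V}

lemma nbr_eq (h : G.neighborSet v = {u}) {w : V} (hw : G.Adj v w) : w = u := by
  have : w ∈ G.neighborSet v := hw
  rwa [h, Set.mem_singleton_iff] at this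

lemma path_avoid (h : G.neighborSet v = {u}) {x y : V} (hx : x ≠ v) (hy : y ≠ v)
    (p : G.Walk x y) (hp : p.IsPath) : v ∉ p.support := by
  intro hv
  classical
  set q := p.takeUntil v hv with hq
  set r := p.dropUntil v hv with hr
  have hspec : q.append r = p := p.take_spec hv
  have hnodup : (q.append r).support.Nodup := by rw [hspec]; exact hp.support_nodup
  rw [SimpleGraph.Walk.support_append] at hnodup
  have hqp : q.IsPath := hp.takeUntil hv
  have hrp : r.IsPath := hp.dropUntil hv
  obtain ⟨w, hadj, r', hr'⟩ := SimpleGraph.Walk.exists_eq_cons_of_ne (Ne.symm hy) r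
  have hwu : w = u := nbr_eq h hadj
  have hur : u ∈ r.support.tail := by
    rw [hr', SimpleGraph.Walk.support_cons]
    simp [← hwu]
  obtain ⟨w', hadj', q', hq'⟩ := SimpleGraph.Walk.exists_eq_cons_of_ne (Ne.symm hx) q.reverse
  have hwu' : w' = u := nbr_eq h hadj'
  have huq : u ∈ q.support := by
    have : u ∈ q.reverse.support := by
      rw [hq', SimpleGraph.Walk.support_cons]
      simp [← hwu']
    rwa [SimpleGraph.Walk.support_reverse, List.mem_reverse] at this
  exact (List.disjoint_of_nodup_append hnodup) huq hur

lemma lift_walk {x y : V} (p : G.Walk x y) : ∀ (hx : x ≠ v) (hy : y ≠ v), v ∉ p.support →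
    ∃ q : (G.induce {w : V | w ≠ v}).Walk ⟨x, hx⟩ ⟨y, hy⟩, q.length = p.length := by
  induction p with
  | nil => exact fun hx hy _ => ⟨SimpleGraph.Walk.nil, rfl⟩
  | @cons a b c h p ih =>
    intro ha hc hs
    rw [SimpleGraph.Walk.support_cons] at hs
    have hb : b ≠ v := by
      intro e
      exact hs (List.mem_cons_of_mem _ (e ▸ p.start_mem_support))
    obtain ⟨q, hq⟩ := ih hb hc (fun hv => hs (List.mem_cons_of_mem _ hv))
    exact ⟨SimpleGraph.Walk.cons (by exact h) q, by show q.length + 1 = p.length + 1; rw [hq]⟩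

lemma dist_pendant (hconn : G.Connected) (h : G.neighborSet v = {u}) {x : V} (hx : x ≠ v) :
    G.dist v x = 1 + G.dist u x := by
  have hadj : G.Adj v u := by
    have : u ∈ G.neighborSet v := by rw [h]; exact rfl
    exact this
  refine le_antisymm ?_ ?_
  · calc G.dist v x ≤ G.dist v u + G.dist u x := hconn.dist_triangle
    _ = 1 + G.dist u x := by rw [SimpleGraph.dist_eq_one_iff_adj.mpr hadj]
  · obtain ⟨p, hp, hlen⟩ := (hconn.preconnected v x).exists_path_of_dist
    cases p with
    | nil => exact absurd rfl (Ne.symm hx)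
    | cons hvw q =>
      rename_i w
      have hw : u = w := (nbr_eq h hvw).symm
      subst hw
      have : G.dist u x ≤ q.length := SimpleGraph.dist_le q
      simp only [SimpleGraph.Walk.length_cons] at hlen
      omega

lemma dist_induce (hconn : G.Connected) (h : G.neighborSet v = {u})
    (x y : {w : V | w ≠ v}) :
    (G.induce {w : V | w ≠ v}).dist x y = G.dist x.1 y.1 := by
  obtain ⟨x, hx⟩ := x
  obtain ⟨y, hy⟩ := y
  obtain ⟨p, hp, hlen⟩ := (hconn.preconnected x y).exists_path_of_dist
  have havoid : v ∉ p.support := path_avoid h hx hy p hp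
  obtain ⟨q, hq⟩ := lift_walk p hx hy havoid
  refine le_antisymm ?_ ?_
  · calc (G.induce {w : V | w ≠ v}).dist ⟨x, hx⟩ ⟨y, hy⟩ ≤ q.length := SimpleGraph.dist_le q
    _ = G.dist x y := by rw [hq, hlen]
  · have hreach : (G.induce {w : V | w ≠ v}).Reachable ⟨x, hx⟩ ⟨y, hy⟩ := ⟨q⟩
    obtain ⟨r, _, hrlen⟩ := hreach.exists_path_of_dist
    have := SimpleGraph.dist_le (r.map (SimpleGraph.Embedding.induce {w : V | w ≠ v}).toHom)
    rwa [SimpleGraph.Walk.length_map, hrlen] at this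

lemma delta4_def (G : SimpleGraph V) (a b c d : V) : delta4 G a b c d =
    max (max (G.dist a b + G.dist c d) (G.dist a c + G.dist b d)) (G.dist a d + G.dist b c) -
      min (min (max (G.dist a b + G.dist c d) (G.dist a c + G.dist b d))
        (max (G.dist a c + G.dist b d) (G.dist a d + G.dist b c)))
        (max (G.dist a b + G.dist c d) (G.dist a d + G.dist b c)) := rfl

lemma delta4_swap_ab (G : SimpleGraph V) (a b c d : V) :
    delta4 G a b c d = delta4 G b a c d := by
  rw [delta4_def, delta4_def, SimpleGraph.dist_comm (G := G) (u := b) (v := a)]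
  omega

lemma delta4_swap_ac (G : SimpleGraph V) (a b c d : V) :
    delta4 G a b c d = delta4 G c b a d := by
  rw [delta4_def, delta4_def, SimpleGraph.dist_comm (G := G) (u := c) (v := b),
    SimpleGraph.dist_comm (G := G) (u := c) (v := a),
    SimpleGraph.dist_comm (G := G) (u := b) (v := a)]
  omega

lemma delta4_swap_ad (G : SimpleGraph V) (a b c d : V) :
    delta4 G a b c d = delta4 G d b c a := by
  rw [delta4_def, delta4_def, SimpleGraph.dist_comm (G := G) (u := d) (v := b),
    SimpleGraph.dist_comm (G := G) (u := c) (v := a),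
    SimpleGraph.dist_comm (G := G) (u := d) (v := c),
    SimpleGraph.dist_comm (G := G) (u := b) (v := a),
    SimpleGraph.dist_comm (G := G) (u := d) (v := a)]
  omega

lemma delta4_pendant (hconn : G.Connected) (h : G.neighborSet v = {u}) {b c d : V}
    (hb : b ≠ v) (hc : c ≠ v) (hd : d ≠ v) : delta4 G v b c d = delta4 G u b c d := by
  rw [delta4_def, delta4_def, dist_pendant hconn h hb, dist_pendant hconn h hc,
    dist_pendant hconn h hd]
  omega

lemma deg_ab (hconn : G.Connected) (c d : V) : delta4 G v v c d = 0 := by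
  have h0 : G.dist v v = 0 := SimpleGraph.dist_self
  have htri : G.dist c d ≤ G.dist c v + G.dist v d := hconn.dist_triangle
  have hcm : G.dist c v = G.dist v c := SimpleGraph.dist_comm (G := G) (u := c) (v := v)
  rw [delta4_def]
  omega

lemma deg_ac (hconn : G.Connected) (b d : V) : delta4 G v b v d = 0 := by
  have h0 : G.dist v v = 0 := SimpleGraph.dist_self
  have htri : G.dist b d ≤ G.dist b v + G.dist v d := hconn.dist_triangle
  have hcm : G.dist b v = G.dist v b := SimpleGraph.dist_comm (G := G) (u := b) (v := v)
  rw [delta4_def]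
  omega

lemma deg_ad (hconn : G.Connected) (b c : V) : delta4 G v b c v = 0 := by
  have h0 : G.dist v v = 0 := SimpleGraph.dist_self
  have htri : G.dist b c ≤ G.dist b v + G.dist v c := hconn.dist_triangle
  have hcm : G.dist b v = G.dist v b := SimpleGraph.dist_comm (G := G) (u := b) (v := v)
  have hcm' : G.dist c v = G.dist v c := SimpleGraph.dist_comm (G := G) (u := c) (v := v)
  rw [delta4_def]
  omega

lemma deg_bc (hconn : G.Connected) (a d : V) : delta4 G a v v d = 0 := by
  have h0 : G.dist v v = 0 := SimpleGraph.dist_self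
  have htri : G.dist a d ≤ G.dist a v + G.dist v d := hconn.dist_triangle
  rw [delta4_def]
  omega

lemma deg_bd (hconn : G.Connected) (a c : V) : delta4 G a v c v = 0 := by
  have h0 : G.dist v v = 0 := SimpleGraph.dist_self
  have htri : G.dist a c ≤ G.dist a v + G.dist v c := hconn.dist_triangle
  have hcm : G.dist c v = G.dist v c := SimpleGraph.dist_comm (G := G) (u := c) (v := v)
  rw [delta4_def]
  omega

lemma deg_cd (hconn : G.Connected) (a b : V) : delta4 G a b v v = 0 := by
  have h0 : G.dist v v = 0 := SimpleGraph.dist_self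
  have htri : G.dist a b ≤ G.dist a v + G.dist v b := hconn.dist_triangle
  have hcm : G.dist b v = G.dist v b := SimpleGraph.dist_comm (G := G) (u := b) (v := v)
  rw [delta4_def]
  omega

lemma hyp_set_finite (W : Type*) [Finite W] (H : SimpleGraph W) :
    {n | ∃ a b c d, delta4 H a b c d = n}.Finite := by
  have : {n | ∃ a b c d, delta4 H a b c d = n} =
      Set.range (fun p : W × W × W × W => delta4 H p.1 p.2.1 p.2.2.1 p.2.2.2) := by
    ext n
    constructor
    · rintro ⟨a, b, c, d, rfl⟩
      exact ⟨⟨a, b, c, d⟩, rfl⟩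
    · rintro ⟨⟨a, b, c, d⟩, rfl⟩
      exact ⟨a, b, c, d, rfl⟩
  rw [this]
  exact Set.finite_range _

end Aux

/-- Deleting a degree-one vertex of a connected graph with more than four vertices does
not change the hyperbolicity. -/
theorem hyperbolicity_delete_degree_one {V : Type*} [Fintype V] (G : SimpleGraph V)
    (hconn : G.Connected) (hcard : 4 < Fintype.card V) (v : V) (hdeg : deg G v = 1) :
    hyperbolicity (G.induce {w : V | w ≠ v}) = hyperbolicity G := by
  obtain ⟨u, hu⟩ := Set.ncard_eq_one.mp hdeg
  have hadj : G.Adj v u := by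
    have : u ∈ G.neighborSet v := by rw [hu]; exact rfl
    exact this
  have huv : u ≠ v := Ne.symm hadj.ne
  have hbdd : BddAbove {n | ∃ a b c d, delta4 G a b c d = n} :=
    (hyp_set_finite V G).bddAbove
  have hbdd' : BddAbove {n | ∃ a b c d,
      delta4 (G.induce {w : V | w ≠ v}) a b c d = n} :=
    (hyp_set_finite _ _).bddAbove
  have hne : {n | ∃ a b c d, delta4 G a b c d = n}.Nonempty := ⟨_, v, v, v, v, rfl⟩
  obtain ⟨w₀, hw₀⟩ := Fintype.exists_ne_of_one_lt_card (by omega) v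
  have hne' : {n | ∃ a b c d,
      delta4 (G.induce {w : V | w ≠ v}) a b c d = n}.Nonempty :=
    ⟨_, ⟨w₀, hw₀⟩, ⟨w₀, hw₀⟩, ⟨w₀, hw₀⟩, ⟨w₀, hw₀⟩, rfl⟩
  have hdelta' : ∀ a b c d : {w : V | w ≠ v},
      delta4 (G.induce {w : V | w ≠ v}) a b c d = delta4 G a.1 b.1 c.1 d.1 := by
    intro a b c d
    rw [delta4_def, delta4_def, dist_induce hconn hu, dist_induce hconn hu,
      dist_induce hconn hu, dist_induce hconn hu, dist_induce hconn hu,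
      dist_induce hconn hu]
  have hmem : ∀ (a b c d : V), a ≠ v → b ≠ v → c ≠ v → d ≠ v →
      delta4 G a b c d ≤ hyperbolicity (G.induce {w : V | w ≠ v}) := by
    intro a b c d ha hb hc hd
    exact le_csSup hbdd' ⟨⟨a, ha⟩, ⟨b, hb⟩, ⟨c, hc⟩, ⟨d, hd⟩, hdelta' _ _ _ _⟩
  have key : ∀ a b c d : V,
      delta4 G a b c d ≤ hyperbolicity (G.induce {w : V | w ≠ v}) := by
    intro a b c d
    by_cases ha : a = v
    · by_cases hb : b = v
      · rw [ha, hb, deg_ab hconn]; exact Nat.zero_le _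
      · by_cases hc : c = v
        · rw [ha, hc, deg_ac hconn]; exact Nat.zero_le _
        · by_cases hd : d = v
          · rw [ha, hd, deg_ad hconn]; exact Nat.zero_le _
          · rw [ha, delta4_pendant hconn hu hb hc hd]; exact hmem u b c d huv hb hc hd
    · by_cases hb : b = v
      · by_cases hc : c = v
        · rw [hb, hc, deg_bc hconn]; exact Nat.zero_le _
        · by_cases hd : d = v
          · rw [hb, hd, deg_bd hconn]; exact Nat.zero_le _
          · rw [hb, delta4_swap_ab, delta4_pendant hconn hu ha hc hd]
            exact hmem u a c d huv ha hc hd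
      · by_cases hc : c = v
        · by_cases hd : d = v
          · rw [hc, hd, deg_cd hconn]; exact Nat.zero_le _
          · rw [hc, delta4_swap_ac, delta4_pendant hconn hu hb ha hd]
            exact hmem u b a d huv hb ha hd
        · by_cases hd : d = v
          · rw [hd, delta4_swap_ad, delta4_pendant hconn hu hb hc ha]
            exact hmem u b c a huv hb hc ha
          · exact hmem a b c d ha hb hc hd
  refine le_antisymm ?_ ?_
  · refine csSup_le hne' ?_
    rintro n ⟨a, b, c, d, rfl⟩
    exact le_csSup hbdd ⟨a.1, b.1, c.1, d.1, (hdelta' a b c d).symm⟩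
  · refine csSup_le hne ?_
    rintro n ⟨a, b, c, d, rfl⟩
    exact key a b c d
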